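/- For λ ∈ H (i.e., λ(s_i) = t, λ(t_j) = t², λ = 1 elsewhere) the character χ satisfies χ(λ) = t². Consequently each f_i = ∑_{m ∈ K_{(1)}, ⟨m,t_i⟩=1} c(m) ∏_{n ≠ t_i} z(n)^{⟨m,n⟩} is H-invariant, while z(t_i)f_i is H-semiinvariant with weight t². -/

import Mathlib

open Finset

variable {ι : Type*} [Fintype ι]

/-- Real dot pairing between `M_ℝ` and `N_ℝ` (identified via the standard basis). -/
def dotR (x y : ι → ℝ) : ℝ := ∑ i, x i * y i

/-- Integral pairing between the lattice `M` and its dual `N`. -/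
def dotZ (x y : ι → ℤ) : ℤ := ∑ i, x i * y i

/-- Embedding of lattice points into the real vector space. -/
def toR (m : ι → ℤ) : ι → ℝ := fun i => (m i : ℝ)

/-- The rational polyhedral cone generated by a finite set of lattice points. -/
def coneGen (S : Finset (ι → ℤ)) : Set (ι → ℝ) :=
  {x | ∃ c : (ι → ℤ) → ℝ, (∀ s, 0 ≤ c s) ∧ x = ∑ s ∈ S, c s • toR s}

/-- The dual cone. -/
def dualCone (K : Set (ι → ℝ)) : Set (ι → ℝ) :=
  {y | ∀ x ∈ K, 0 ≤ dotR x y}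

lemma zpow_sum' {β : Type*} (t : ℂ) (ht : t ≠ 0) (S : Finset β) (f : β → ℤ) :
    t ^ (∑ b ∈ S, f b) = ∏ b ∈ S, t ^ f b := by
  classical
  induction S using Finset.induction with
  | empty => simp
  | insert _ _ h ih => simp [Finset.sum_insert h, Finset.prod_insert h, zpow_add₀ ht, ih]

lemma sq_zpow (t : ℂ) (k : ℤ) : (t ^ 2) ^ k = t ^ (2 * k) := by
  rw [← zpow_natCast t 2, ← zpow_mul]; norm_num

/-- for `λ ∈ H` (i.e. `λ(s_l) = t`, `λ(t_j) = t²`, `λ = 1`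
elsewhere) the character satisfies `χ(λ) = t²`; consequently each
`f_i = ∑_{m ∈ K_{(1)}, ⟨m,t_i⟩=1} c(m) ∏_{n ≠ t_i} z(n)^{⟨m,n⟩}` is
`H`-invariant, while `z(t_i) f_i` is `H`-semiinvariant of weight `t²`. -/
theorem stmt_17 (A B : Finset (ι → ℤ)) (degv α : ι → ℤ) (r d : ℕ)
    (s : Fin (2 * r) → ι → ℤ) (ts : Fin d → ι → ℤ)
    (c : (ι → ℤ) → ℂ) (t : ℂ) (ht : t ≠ 0)
    (hsB : ∀ l, s l ∈ B) (htB : ∀ j, ts j ∈ B)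
    (hinj : Function.Injective (Sum.elim s ts))
    (hdecomp : (2 : ℤ) • degv = (∑ l, s l) + (2 : ℤ) • ∑ j, ts j)
    (hA1 : ∀ m ∈ A, dotZ m degv = 1)
    (hnn : ∀ m ∈ A, ∀ n ∈ B, 0 ≤ dotZ m n)
    (hα : dotZ α degv = 1)
    (L : (ι → ℤ) → ℂ)
    (hLs : ∀ l, L (s l) = t)
    (hLt : ∀ j, L (ts j) = t ^ 2)
    (hLo : ∀ n ∈ B, (∀ l, s l ≠ n) → (∀ j, ts j ≠ n) → L n = 1)
    (i : Fin d) :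
    (∏ n ∈ B, L n ^ dotZ α n = t ^ 2) ∧
    (∀ z : (ι → ℤ) → ℂ,
      (∑ m ∈ A.filter fun m => dotZ m (ts i) = 1,
          c m * ∏ n ∈ B.erase (ts i), (L n * z n) ^ dotZ m n)
        = ∑ m ∈ A.filter fun m => dotZ m (ts i) = 1,
            c m * ∏ n ∈ B.erase (ts i), z n ^ dotZ m n) ∧
    (∀ z : (ι → ℤ) → ℂ,
      (L (ts i) * z (ts i)) *
          ∑ m ∈ A.filter fun m => dotZ m (ts i) = 1,
            c m * ∏ n ∈ B.erase (ts i), (L n * z n) ^ dotZ m n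
        = t ^ 2 *
            (z (ts i) *
              ∑ m ∈ A.filter fun m => dotZ m (ts i) = 1,
                c m * ∏ n ∈ B.erase (ts i), z n ^ dotZ m n)) := by
  classical
  -- linearity of dotZ in the second argument
  have hd2 : ∀ m f : ι → ℤ, dotZ m ((2 : ℤ) • f) = 2 * dotZ m f := by
    intro m f
    simp [dotZ, Finset.mul_sum, mul_left_comm]
  have hdadd : ∀ m a b : ι → ℤ, dotZ m (a + b) = dotZ m a + dotZ m b := by
    intro m a b
    simp [dotZ, mul_add, Finset.sum_add_distrib]
  have hdsum : ∀ (k : ℕ) (m : ι → ℤ) (g : Fin k → ι → ℤ),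
      dotZ m (∑ j, g j) = ∑ j, dotZ m (g j) := by
    intro k m g
    simp only [dotZ, Finset.sum_apply, Finset.mul_sum]
    exact Finset.sum_comm
  have key : ∀ m : ι → ℤ,
      (∑ l, dotZ m (s l)) + 2 * ∑ j, dotZ m (ts j) = 2 * dotZ m degv := by
    intro m
    have h := congrArg (dotZ m) hdecomp
    rw [hd2, hdadd, hd2, hdsum, hdsum] at h
    linarith
  -- injectivity facts
  have hsinj : Function.Injective s := fun a b h => by
    have := hinj (show Sum.elim s ts (.inl a) = Sum.elim s ts (.inl b) from h)
    exact Sum.inl.inj this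
  have htinj : Function.Injective ts := fun a b h => by
    have := hinj (show Sum.elim s ts (.inr a) = Sum.elim s ts (.inr b) from h)
    exact Sum.inr.inj this
  have hst : ∀ l j, s l ≠ ts j := fun l j h => by
    have := hinj (show Sum.elim s ts (.inl l) = Sum.elim s ts (.inr j) from h)
    simp at this
  set S : Finset (ι → ℤ) := Finset.image s Finset.univ with hS
  set T : Finset (ι → ℤ) := Finset.image ts Finset.univ with hT
  have hdisj : Disjoint S T := by
    rw [Finset.disjoint_left]
    rintro a ha hb
    simp only [hS, hT, Finset.mem_image, Finset.mem_univ, true_and] at ha hb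
    obtain ⟨l, rfl⟩ := ha
    obtain ⟨j, hj⟩ := hb
    exact hst l j hj.symm
  have hsub : S ∪ T ⊆ B := by
    intro n hn
    rcases Finset.mem_union.mp hn with h | h <;>
      simp only [hS, hT, Finset.mem_image, Finset.mem_univ, true_and] at h <;>
      obtain ⟨l, rfl⟩ := h
    · exact hsB l
    · exact htB l
  -- the master product formula
  have hprod : ∀ m : ι → ℤ, ∏ n ∈ B, L n ^ dotZ m n
      = t ^ ((∑ l, dotZ m (s l)) + 2 * ∑ j, dotZ m (ts j)) := by
    intro m
    have h1 : ∏ n ∈ B, L n ^ dotZ m n = ∏ n ∈ S ∪ T, L n ^ dotZ m n := by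
      refine (Finset.prod_subset hsub ?_).symm
      intro n hnB hn
      have hLn : L n = 1 := by
        refine hLo n hnB (fun l h => hn ?_) (fun j h => hn ?_)
        · exact Finset.mem_union_left _ (by simp [hS, ← h])
        · exact Finset.mem_union_right _ (by simp [hT, ← h])
      simp [hLn]
    rw [h1, Finset.prod_union hdisj]
    have hPS : ∏ n ∈ S, L n ^ dotZ m n = t ^ (∑ l, dotZ m (s l)) := by
      rw [hS, Finset.prod_image (fun a _ b _ h => hsinj h)]
      rw [zpow_sum' t ht]
      exact Finset.prod_congr rfl fun l _ => by rw [hLs l]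
    have hPT : ∏ n ∈ T, L n ^ dotZ m n = t ^ (2 * ∑ j, dotZ m (ts j)) := by
      rw [hT, Finset.prod_image (fun a _ b _ h => htinj h)]
      rw [Finset.mul_sum, zpow_sum' t ht]
      exact Finset.prod_congr rfl fun j _ => by rw [hLt j, sq_zpow]
    rw [hPS, hPT, ← zpow_add₀ ht]
  -- erase product is 1 for relevant m
  have hprodE : ∀ m : ι → ℤ, dotZ m degv = 1 → dotZ m (ts i) = 1 →
      ∏ n ∈ B.erase (ts i), L n ^ dotZ m n = 1 := by
    intro m h1 h2
    have hmem := htB i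
    have heq := Finset.mul_prod_erase B (fun n => L n ^ dotZ m n) hmem
    beta_reduce at heq
    rw [hprod m, key m, h1, hLt i, h2, zpow_one] at heq
    have ht2 : (t ^ 2 : ℂ) ≠ 0 := pow_ne_zero 2 ht
    have : t ^ ((2 : ℤ) * 1) = t ^ 2 := by rw [mul_one, show (2:ℤ) = ((2:ℕ):ℤ) from rfl, zpow_natCast]
    rw [this] at heq
    exact mul_left_cancel₀ ht2 (by rw [heq, mul_one])
  have part2 : ∀ z : (ι → ℤ) → ℂ,
      (∑ m ∈ A.filter fun m => dotZ m (ts i) = 1,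
          c m * ∏ n ∈ B.erase (ts i), (L n * z n) ^ dotZ m n)
        = ∑ m ∈ A.filter fun m => dotZ m (ts i) = 1,
            c m * ∏ n ∈ B.erase (ts i), z n ^ dotZ m n := by
    intro z
    refine Finset.sum_congr rfl fun m hm => ?_
    rw [Finset.mem_filter] at hm
    have hE := hprodE m (hA1 m hm.1) hm.2
    have hEerase : ∏ n ∈ B.erase (ts i), L n ^ dotZ m n = 1 := hE
    calc c m * ∏ n ∈ B.erase (ts i), (L n * z n) ^ dotZ m n
        = c m * ((∏ n ∈ B.erase (ts i), L n ^ dotZ m n) *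
            ∏ n ∈ B.erase (ts i), z n ^ dotZ m n) := by
          rw [← Finset.prod_mul_distrib]
          simp [mul_zpow]
      _ = c m * ∏ n ∈ B.erase (ts i), z n ^ dotZ m n := by rw [hEerase, one_mul]
  refine ⟨?_, part2, ?_⟩
  · rw [hprod α, key α, hα]
    rw [show ((2:ℤ)*1) = ((2:ℕ):ℤ) by norm_num, zpow_natCast]
  · intro z
    rw [part2 z, hLt i]
    ring
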